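/- arXiv:2401.13771 — 3 statements merged into one kernel-verified Lean document; each statement's English description precedes it below -/
import Mathlib

section
/- For every weighted tree 𝐭 = (t, (w_v)_{v∈∂t}) with weights w_v ∈ [0,1), the integer part of the weighted Horton–Strahler number equals the classical Horton–Strahler number: ⌊𝐒(𝐭)⌋ = S(t). Moreover, there exists a leaf v ∈ ∂t such that the fractional part of 𝐒(𝐭) equals w_v. -/
/-- Finite rooted plane trees. -/
inductive PTree : Type where
  | node : List PTree → PTree

namespace PTree

/-- The (classical) Horton–Strahler number. -/
def hs : PTree → ℕ
  | node ts =>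
    let vals := ts.attach.map (fun s => hs s.1)
    vals.foldr max 0 + (if 2 ≤ vals.count (vals.foldr max 0) then 1 else 0)
decreasing_by simp_wf; have := List.sizeOf_lt_of_mem s.2; omega

end PTree

/-- `max_{i,j} max (v_i, v_j, 1_{i≠j} + min (v_i, v_j))` over a list of reals
(indices are distinguished via `List.enum`). -/
def pairCombine (l : List ℝ) : ℝ :=
  (((l.zipIdx.map Prod.swap).map (fun p => (l.zipIdx.map Prod.swap).map (fun q =>
      max (max p.2 q.2) ((if p.1 ≠ q.1 then (1:ℝ) else 0) + min p.2 q.2)))).flatten).foldr max 0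

/-- Weighted trees: finite rooted plane trees carrying a real number at each node; only the
numbers at the leaves (the weights) are relevant. -/
inductive WTree : Type where
  | node : ℝ → List WTree → WTree

namespace WTree

/-- The weighted Horton–Strahler number: the weight for a single node; otherwise
`max_{i,j} max (𝐒(𝐭_i), 𝐒(𝐭_j), 1_{i≠j} + min (𝐒(𝐭_i), 𝐒(𝐭_j)))` over the root subtrees. -/
def whs : WTree → ℝ
  | node w [] => w
  | node _ (t :: ts) => pairCombine ((t :: ts).attach.map (fun s => whs s.1))
decreasing_by simp_wf; have := List.sizeOf_lt_of_mem s.2; simp only [List.cons.sizeOf_spec] at this ⊢; omega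

/-- The underlying (plane) tree of a weighted tree. -/
def shape : WTree → PTree
  | node _ ts => .node (ts.attach.map (fun s => shape s.1))
decreasing_by simp_wf; have := List.sizeOf_lt_of_mem s.2; omega

/-- The list of the weights of the leaves, in depth-first order. -/
def leafWeights : WTree → List ℝ
  | node w [] => [w]
  | node _ (t :: ts) => ((t :: ts).attach.map (fun s => leafWeights s.1)).flatten
decreasing_by simp_wf; have := List.sizeOf_lt_of_mem s.2; simp only [List.cons.sizeOf_spec] at this ⊢; omega

end WTree

section Helpers

theorem le_foldr_max {l : List ℝ} {x : ℝ} (h : x ∈ l) : x ≤ l.foldr max 0 := by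
  induction l with
  | nil => simp at h
  | cons a l ih =>
    rcases List.mem_cons.mp h with rfl | h
    · exact le_max_left _ _
    · exact le_trans (ih h) (le_max_right _ _)

theorem foldr_max_nonneg (l : List ℝ) : 0 ≤ l.foldr max 0 := by
  induction l with
  | nil => simp
  | cons a l ih => exact le_trans ih (le_max_right _ _)

theorem foldr_max_lt {l : List ℝ} {c : ℝ} (hc : 0 < c) (h : ∀ x ∈ l, x < c) :
    l.foldr max 0 < c := by
  induction l with
  | nil => simpa
  | cons a l ih =>
    exact max_lt (h a (List.mem_cons_self)) (ih fun x hx => h x (List.mem_cons_of_mem _ hx))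

theorem foldr_max_mem (l : List ℝ) : l.foldr max 0 = 0 ∨ l.foldr max 0 ∈ l := by
  induction l with
  | nil => simp
  | cons a l ih =>
    rcases le_total a (l.foldr max 0) with h | h
    · rcases ih with h0 | hm
      · left; simp only [List.foldr_cons, max_eq_right h, h0]; exact max_eq_right (h0 ▸ h)
      · right; simp only [List.foldr_cons, max_eq_right h]; exact List.mem_cons_of_mem _ hm
    · right; simp only [List.foldr_cons, max_eq_left h]; exact List.mem_cons_self

theorem nat_le_foldr_max {l : List ℕ} {x : ℕ} (h : x ∈ l) : x ≤ l.foldr max 0 := by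
  induction l with
  | nil => simp at h
  | cons a l ih =>
    rcases List.mem_cons.mp h with rfl | h
    · exact le_max_left _ _
    · exact le_trans (ih h) (le_max_right _ _)

theorem nat_foldr_max_mem {l : List ℕ} (h : l ≠ []) : l.foldr max 0 ∈ l := by
  induction l with
  | nil => simp at h
  | cons a l ih =>
    rcases eq_or_ne l [] with rfl | hl
    · simp
    · rcases le_total a (l.foldr max 0) with h' | h'
      · simp only [List.foldr_cons, max_eq_right h']; exact List.mem_cons_of_mem _ (ih hl)
      · simp only [List.foldr_cons, max_eq_left h']; exact List.mem_cons_self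

theorem two_le_count_indices {l : List ℕ} {a : ℕ} (h : 2 ≤ l.count a) :
    ∃ i j, ∃ (_ : i < l.length) (_ : j < l.length), i ≠ j ∧ l[i] = a ∧ l[j] = a := by
  induction l with
  | nil => simp at h
  | cons b l ih =>
    by_cases hb : b = a
    · subst hb
      rw [List.count_cons_self] at h
      have h1 : 1 ≤ l.count b := by omega
      obtain ⟨k, hk, hk2⟩ := List.getElem_of_mem (List.count_pos_iff.mp h1)
      exact ⟨0, k + 1, by simp, by simpa using Nat.succ_lt_succ hk, by omega, by simp, by simpa⟩
    · rw [List.count_cons_of_ne hb] at h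
      obtain ⟨i, j, hi, hj, hij, h1, h2⟩ := ih h
      exact ⟨i + 1, j + 1, by simpa using Nat.succ_lt_succ hi,
        by simpa using Nat.succ_lt_succ hj, by omega, by simpa, by simpa⟩

theorem indices_two_le_count {l : List ℕ} {a : ℕ} {i j : ℕ}
    (hi : i < l.length) (hj : j < l.length) (hij : i ≠ j)
    (h1 : l[i] = a) (h2 : l[j] = a) : 2 ≤ l.count a := by
  induction l generalizing i j with
  | nil => simp at hi
  | cons b l ih =>
    match i, j with
    | 0, 0 => omega
    | 0, j + 1 =>
      simp only [List.getElem_cons_zero] at h1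
      simp only [List.getElem_cons_succ] at h2
      have hm : a ∈ l := h2 ▸ List.getElem_mem _
      have := List.count_pos_iff.mpr hm
      rw [h1, List.count_cons_self]
      omega
    | i + 1, 0 =>
      simp only [List.getElem_cons_zero] at h2
      simp only [List.getElem_cons_succ] at h1
      have hm : a ∈ l := h1 ▸ List.getElem_mem _
      have := List.count_pos_iff.mpr hm
      rw [h2, List.count_cons_self]
      omega
    | i + 1, j + 1 =>
      simp only [List.getElem_cons_succ] at h1 h2
      have := ih (by simpa using hi) (by simpa using hj) (by omega) h1 h2
      rw [List.count_cons]
      omega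

theorem mem_enum_iff {l : List ℝ} {p : ℕ × ℝ} :
    p ∈ (l.zipIdx.map Prod.swap) ↔ ∃ (h : p.1 < l.length), p.2 = l[p.1] := by
  rw [List.mem_map]
  constructor
  · rintro ⟨x, hx, rfl⟩
    have hlt := List.getElem?_eq_some_iff.mp (List.mem_zipIdx_iff_getElem?.mp hx)
    exact ⟨hlt.1, hlt.2.symm⟩
  · rintro ⟨h, he⟩
    exact ⟨p.swap, List.mem_zipIdx_iff_getElem?.mpr (List.getElem?_eq_some_iff.mpr ⟨h, he.symm⟩),
      Prod.swap_swap _⟩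

theorem enum_mk_mem {l : List ℝ} {i : ℕ} (h : i < l.length) : (i, l[i]) ∈ (l.zipIdx.map Prod.swap) :=
  mem_enum_iff.mpr ⟨h, rfl⟩

theorem pc_ge {l : List ℝ} {p q : ℕ × ℝ} (hp : p ∈ (l.zipIdx.map Prod.swap)) (hq : q ∈ (l.zipIdx.map Prod.swap)) :
    max (max p.2 q.2) ((if p.1 ≠ q.1 then (1:ℝ) else 0) + min p.2 q.2) ≤ pairCombine l := by
  apply le_foldr_max
  exact List.mem_flatten.mpr ⟨_, List.mem_map_of_mem hp, List.mem_map_of_mem hq⟩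

theorem pc_lt {l : List ℝ} {c : ℝ} (hc : 0 < c)
    (h : ∀ p ∈ (l.zipIdx.map Prod.swap), ∀ q ∈ (l.zipIdx.map Prod.swap),
      max (max p.2 q.2) ((if p.1 ≠ q.1 then (1:ℝ) else 0) + min p.2 q.2) < c) :
    pairCombine l < c := by
  apply foldr_max_lt hc
  intro x hx
  obtain ⟨L, hL, hxL⟩ := List.mem_flatten.mp hx
  obtain ⟨p, hp, rfl⟩ := List.mem_map.mp hL
  obtain ⟨q, hq, rfl⟩ := List.mem_map.mp hxL
  exact h p hp q hq

theorem pc_mem {l : List ℝ} (hl : l ≠ []) (hnn : ∀ x ∈ l, 0 ≤ x) :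
    ∃ p ∈ (l.zipIdx.map Prod.swap), ∃ q ∈ (l.zipIdx.map Prod.swap),
      pairCombine l = max (max p.2 q.2) ((if p.1 ≠ q.1 then (1:ℝ) else 0) + min p.2 q.2) := by
  have key : pairCombine l = 0 ∨ pairCombine l ∈ (((l.zipIdx.map Prod.swap).map (fun p => (l.zipIdx.map Prod.swap).map (fun q =>
      max (max p.2 q.2) ((if p.1 ≠ q.1 then (1:ℝ) else 0) + min p.2 q.2)))).flatten) :=
    foldr_max_mem _
  rcases key with h0 | hm
  · have hlen : 0 < l.length := List.length_pos_iff.mpr hl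
    have hp : (0, l[0]) ∈ (l.zipIdx.map Prod.swap) := enum_mk_mem hlen
    refine ⟨(0, l[0]), hp, (0, l[0]), hp, ?_⟩
    have hge := pc_ge hp hp
    have heq : max (max l[0] l[0]) ((if (0:ℕ) ≠ 0 then (1:ℝ) else 0) + min l[0] l[0]) = l[0] := by
      simp
    rw [heq] at hge ⊢
    have := hnn l[0] (List.getElem_mem hlen)
    linarith [h0 ▸ hge]
  · obtain ⟨L, hL, hxL⟩ := List.mem_flatten.mp hm
    obtain ⟨p, hp, rfl⟩ := List.mem_map.mp hL
    obtain ⟨q, hq, hq2⟩ := List.mem_map.mp hxL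
    exact ⟨p, hp, q, hq, hq2.symm⟩

end Helpers

theorem WTree.key (t : WTree) : (∀ w ∈ t.leafWeights, w ∈ Set.Ico (0:ℝ) 1) →
    ∃ w ∈ t.leafWeights, t.whs = (t.shape.hs : ℝ) + w := by
  match t with
  | .node w [] =>
    intro hw
    refine ⟨w, ?_, ?_⟩
    · rw [WTree.leafWeights]; exact List.mem_singleton.mpr rfl
    · rw [WTree.whs, WTree.shape]
      simp [PTree.hs]
  | .node w (c :: cs) =>
    intro hw
    have IH : ∀ s ∈ c :: cs, ∃ w' ∈ s.leafWeights, s.whs = (s.shape.hs : ℝ) + w' := by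
      intro s hs
      refine WTree.key s ?_
      intro w' hw'
      refine hw w' ?_
      rw [WTree.leafWeights, List.attach_map_val]
      exact List.mem_flatten.mpr ⟨_, List.mem_map_of_mem hs, hw'⟩
    -- unfoldings
    have hwhs : (WTree.node w (c :: cs)).whs = pairCombine ((c :: cs).map WTree.whs) := by
      rw [WTree.whs, List.attach_map_val]
    have hhs0 : ((WTree.node w (c :: cs)).shape).hs =
        (((c :: cs).map WTree.shape).map PTree.hs).foldr max 0
          + (if 2 ≤ (((c :: cs).map WTree.shape).map PTree.hs).count
              ((((c :: cs).map WTree.shape).map PTree.hs).foldr max 0) then 1 else 0) := by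
      rw [WTree.shape, List.attach_map_val, PTree.hs, List.attach_map_val]
    set l : List ℝ := (c :: cs).map WTree.whs with hldef
    set vals : List ℕ := ((c :: cs).map WTree.shape).map PTree.hs with hvalsdef
    set M : ℕ := vals.foldr max 0 with hMdef
    set b : ℕ := if 2 ≤ vals.count M then 1 else 0 with hbdef
    have hlen : l.length = (c :: cs).length := by rw [hldef]; exact List.length_map ..
    have hvlen : vals.length = (c :: cs).length := by
      rw [hvalsdef, List.length_map, List.length_map]
    have hlv : l.length = vals.length := by omega
    have hlne : l ≠ [] := by rw [hldef]; simp
    have hvne : vals ≠ [] := by rw [hvalsdef]; simp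
    -- pointwise decomposition
    have hpt : ∀ i, ∀ (hi1 : i < l.length) (hi2 : i < vals.length),
        ∃ w', w' ∈ (WTree.node w (c :: cs)).leafWeights ∧ w' ∈ Set.Ico (0:ℝ) 1 ∧
          l[i] = (vals[i] : ℝ) + w' := by
      intro i hi1 hi2
      have hi : i < (c :: cs).length := by omega
      obtain ⟨w', hw1, hw2⟩ := IH (c :: cs)[i] (List.getElem_mem hi)
      have hmem : w' ∈ (WTree.node w (c :: cs)).leafWeights := by
        rw [WTree.leafWeights, List.attach_map_val]
        exact List.mem_flatten.mpr ⟨_, List.mem_map_of_mem (List.getElem_mem hi), hw1⟩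
      refine ⟨w', hmem, hw w' hmem, ?_⟩
      simp only [hldef, hvalsdef, List.getElem_map]
      exact hw2
    have hvle : ∀ i (hi : i < vals.length), vals[i] ≤ M :=
      fun i hi => nat_le_foldr_max (List.getElem_mem hi)
    have hlow : ∀ i (hi1 : i < l.length) (hi2 : i < vals.length), (vals[i] : ℝ) ≤ l[i] := by
      intro i hi1 hi2
      obtain ⟨w', -, hIco, heq⟩ := hpt i hi1 hi2
      rw [heq]
      linarith [hIco.1]
    have hup : ∀ i (hi1 : i < l.length), l[i] < (M : ℝ) + 1 := by
      intro i hi1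
      have hi2 : i < vals.length := by omega
      obtain ⟨w', -, hIco, heq⟩ := hpt i hi1 hi2
      have hle : (vals[i] : ℝ) ≤ (M : ℝ) := by exact_mod_cast hvle i hi2
      rw [heq]
      linarith [hIco.2]
    have hnn : ∀ x ∈ l, 0 ≤ x := by
      intro x hx
      obtain ⟨i, hi1, rfl⟩ := List.getElem_of_mem hx
      have hi2 : i < vals.length := by omega
      exact le_trans (by positivity) (hlow i hi1 hi2)
    -- lower bound
    have hLB : ((M + b : ℕ) : ℝ) ≤ pairCombine l := by
      by_cases hcount : 2 ≤ vals.count M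
      · have hb : b = 1 := if_pos hcount
        obtain ⟨i, j, hi, hj, hij, hvi, hvj⟩ := two_le_count_indices hcount
        have hi1 : i < l.length := by omega
        have hj1 : j < l.length := by omega
        have hge := pc_ge (enum_mk_mem hi1) (enum_mk_mem hj1)
        simp only at hge
        have h1 : (M : ℝ) ≤ l[i] := by
          have := hlow i hi1 hi; rw [hvi] at this; exact this
        have h2 : (M : ℝ) ≤ l[j] := by
          have := hlow j hj1 hj; rw [hvj] at this; exact this
        have hmin : (M : ℝ) ≤ min l[i] l[j] := le_min h1 h2
        have hite : (if i ≠ j then (1:ℝ) else 0) = 1 := if_pos hij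
        rw [hite] at hge
        have : ((M + b : ℕ) : ℝ) ≤ 1 + min l[i] l[j] := by
          rw [hb]; push_cast; linarith
        exact le_trans this (le_trans (le_max_right _ _) hge)
      · have hb : b = 0 := if_neg hcount
        obtain ⟨i, hi, hvi⟩ := List.getElem_of_mem (nat_foldr_max_mem hvne)
        have hi1 : i < l.length := by omega
        have hge := pc_ge (enum_mk_mem hi1) (enum_mk_mem hi1)
        simp only at hge
        have h1 : (M : ℝ) ≤ l[i] := by
          have := hlow i hi1 hi; rw [hvi] at this; exact this
        have : ((M + b : ℕ) : ℝ) ≤ l[i] := by rw [hb]; push_cast; linarith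
        exact le_trans this (le_trans (le_trans (le_max_left _ _) (le_max_left _ _)) hge)
    -- upper bound
    have hUB : pairCombine l < ((M + b : ℕ) : ℝ) + 1 := by
      apply pc_lt (by positivity)
      intro p hp q hq
      obtain ⟨hpl, hpe⟩ := mem_enum_iff.mp hp
      obtain ⟨hql, hqe⟩ := mem_enum_iff.mp hq
      have hbnn : (0:ℝ) ≤ (b : ℝ) := by positivity
      have hub1 : p.2 < ((M + b : ℕ) : ℝ) + 1 := by
        rw [hpe]; have := hup p.1 hpl; push_cast; linarith
      have hub2 : q.2 < ((M + b : ℕ) : ℝ) + 1 := by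
        rw [hqe]; have := hup q.1 hql; push_cast; linarith
      apply max_lt (max_lt hub1 hub2)
      by_cases hij : p.1 ≠ q.1
      · rw [if_pos hij]
        have hpv : p.1 < vals.length := by omega
        have hqv : q.1 < vals.length := by omega
        by_cases hcount : 2 ≤ vals.count M
        · have hb : b = 1 := if_pos hcount
          have hp2 : p.2 < (M:ℝ) + 1 := by rw [hpe]; exact hup p.1 hpl
          have hminle : min p.2 q.2 ≤ p.2 := min_le_left _ _
          rw [hb]; push_cast; linarith
        · have hb : b = 0 := if_neg hcount
          have hnotboth : ¬(vals[p.1] = M ∧ vals[q.1] = M) := by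
            rintro ⟨h1, h2⟩
            exact hcount (indices_two_le_count hpv hqv hij h1 h2)
          obtain ⟨wp, -, hIcop, heqp⟩ := hpt p.1 hpl hpv
          obtain ⟨wq, -, hIcoq, heqq⟩ := hpt q.1 hql hqv
          have hor : vals[p.1] < M ∨ vals[q.1] < M := by
            have h1 := hvle p.1 hpv
            have h2 := hvle q.1 hqv
            by_contra hcon
            push_neg at hcon
            exact hnotboth ⟨by omega, by omega⟩
          rcases hor with h | h
          · have hc : (vals[p.1] : ℝ) + 1 ≤ (M : ℝ) := by exact_mod_cast h
            have hp2 : p.2 < (M : ℝ) := by rw [hpe, heqp]; linarith [hIcop.2]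
            have hminle : min p.2 q.2 ≤ p.2 := min_le_left _ _
            rw [hb]; push_cast; linarith
          · have hc : (vals[q.1] : ℝ) + 1 ≤ (M : ℝ) := by exact_mod_cast h
            have hq2 : q.2 < (M : ℝ) := by rw [hqe, heqq]; linarith [hIcoq.2]
            have hminle : min p.2 q.2 ≤ q.2 := min_le_right _ _
            rw [hb]; push_cast; linarith
      · rw [if_neg hij]
        have hminle : min p.2 q.2 ≤ p.2 := min_le_left _ _
        have hp2 : p.2 < (M:ℝ) + 1 := by rw [hpe]; exact hup p.1 hpl
        push_cast
        linarith
    -- the value is of the form m + w''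
    obtain ⟨p, hp, q, hq, hpc⟩ := pc_mem hlne hnn
    obtain ⟨hpl, hpe⟩ := mem_enum_iff.mp hp
    obtain ⟨hql, hqe⟩ := mem_enum_iff.mp hq
    have hpv : p.1 < vals.length := by omega
    have hqv : q.1 < vals.length := by omega
    obtain ⟨wp, hwp1, hIcop, heqp⟩ := hpt p.1 hpl hpv
    obtain ⟨wq, hwq1, hIcoq, heqq⟩ := hpt q.1 hql hqv
    have hform : ∃ (m : ℕ) (w'' : ℝ), w'' ∈ (WTree.node w (c :: cs)).leafWeights ∧
        w'' ∈ Set.Ico (0:ℝ) 1 ∧ pairCombine l = (m : ℝ) + w'' := by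
      have he : (if p.1 ≠ q.1 then (1:ℝ) else 0) = 0 ∨ (if p.1 ≠ q.1 then (1:ℝ) else 0) = 1 := by
        split <;> simp
      rcases max_choice (max p.2 q.2) ((if p.1 ≠ q.1 then (1:ℝ) else 0) + min p.2 q.2) with h | h <;>
        rw [h] at hpc
      · rcases max_choice p.2 q.2 with h2 | h2 <;> rw [h2] at hpc
        · exact ⟨vals[p.1], wp, hwp1, hIcop, by rw [hpc, hpe, heqp]⟩
        · exact ⟨vals[q.1], wq, hwq1, hIcoq, by rw [hpc, hqe, heqq]⟩
      · rcases min_choice p.2 q.2 with h2 | h2 <;> rw [h2] at hpc <;>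
          rcases he with he | he <;> rw [he] at hpc
        · exact ⟨vals[p.1], wp, hwp1, hIcop, by rw [hpc, hpe, heqp]; ring⟩
        · exact ⟨vals[p.1] + 1, wp, hwp1, hIcop, by rw [hpc, hpe, heqp]; push_cast; ring⟩
        · exact ⟨vals[q.1], wq, hwq1, hIcoq, by rw [hpc, hqe, heqq]; ring⟩
        · exact ⟨vals[q.1] + 1, wq, hwq1, hIcoq, by rw [hpc, hqe, heqq]; push_cast; ring⟩
    obtain ⟨m, w'', hmem, hIco, hpcm⟩ := hform
    refine ⟨w'', hmem, ?_⟩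
    have hmb : m = M + b := by
      rw [hpcm] at hLB hUB
      have h1 := hIco.1
      have h2 := hIco.2
      have hx1 : ((M + b : ℕ) : ℝ) < (m : ℝ) + 1 := by linarith
      have hx2 : (m : ℝ) < ((M + b : ℕ) : ℝ) + 1 := by linarith
      have hy1 : M + b < m + 1 := by exact_mod_cast hx1
      have hy2 : m < M + b + 1 := by exact_mod_cast hx2
      omega
    rw [hwhs, hhs0, hpcm, hmb]
termination_by sizeOf t
decreasing_by
  simp_wf
  have := List.sizeOf_lt_of_mem hs
  simp only [List.cons.sizeOf_spec] at this ⊢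
  omega

/-- For every weighted tree `𝐭` with leaf weights in `[0,1)`, the integer part
of the weighted Horton–Strahler number equals the classical Horton–Strahler number of the
underlying tree, and the fractional part equals the weight of some leaf. -/
theorem stmt_4 (t : WTree) (hw : ∀ w ∈ t.leafWeights, w ∈ Set.Ico (0:ℝ) 1) :
    ⌊t.whs⌋ = (PTree.hs t.shape : ℤ)
      ∧ ∃ w ∈ t.leafWeights, Int.fract t.whs = w := by
  obtain ⟨w, hmem, heq⟩ := WTree.key t hw
  obtain ⟨h0, h1⟩ := hw w hmem
  constructor
  · rw [heq, add_comm, Int.floor_add_natCast, Int.floor_eq_zero_iff.mpr ⟨h0, h1⟩, zero_add]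
  · refine ⟨w, hmem, ?_⟩
    rw [heq, add_comm, Int.fract_add_natCast]
    exact Int.fract_eq_self.mpr ⟨h0, h1⟩
end

section
/- Let X, Y, Z be almost surely finite nonnegative random variables with X and Y independent, E[Y] < 1, and Z integrable. If there exists a random variable X' with the same distribution as X satisfying X' ≤ Y·X + Z almost surely, then X is integrable and E[X] ≤ E[Z]/(1 - E[Y]). -/
open MeasureTheory

private lemma stmt14_ptwise (y x z n : ENNReal) :
    (y * x + z) ⊓ n + n * y * (if n < x then 1 else 0)
      ≤ y * (x ⊓ n) + z + n * (if n < x then 1 else 0) := by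
  by_cases h : n < x
  · simp only [if_pos h, mul_one]
    rw [inf_eq_right.2 h.le]
    calc (y * x + z) ⊓ n + n * y ≤ n + n * y := add_le_add inf_le_right le_rfl
      _ = y * n + n := by ring
      _ ≤ y * n + z + n := add_le_add le_self_add le_rfl
  · simp only [if_neg h, mul_zero, add_zero]
    rw [inf_eq_left.2 (not_lt.1 h)]
    exact inf_le_left

/-- Let `X, Y, Z` be almost surely finite nonnegative random variables
(valued in `[0,∞]`) with `X` and `Y` independent, `E[Y] < 1` and `Z` integrable. If there is
a random variable `X'` with the same distribution as `X` satisfying `X' ≤ Y·X + Z` almost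
surely, then `X` is integrable and `E[X] ≤ E[Z]/(1 - E[Y])`. -/
theorem stmt_14 {Ω : Type*} [MeasurableSpace Ω] (P : Measure Ω) [IsProbabilityMeasure P]
    (X Y Z X' : Ω → ENNReal)
    (hX : Measurable X) (hY : Measurable Y) (hZ : Measurable Z) (hX' : Measurable X')
    (hXfin : ∀ᵐ ω ∂P, X ω < ⊤) (hYfin : ∀ᵐ ω ∂P, Y ω < ⊤) (hZfin : ∀ᵐ ω ∂P, Z ω < ⊤)
    (hindep : ProbabilityTheory.IndepFun X Y P)
    (hEY : ∫⁻ ω, Y ω ∂P < 1)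
    (hZint : ∫⁻ ω, Z ω ∂P < ⊤)
    (hlaw : Measure.map X' P = Measure.map X P)
    (hle : ∀ᵐ ω ∂P, X' ω ≤ Y ω * X ω + Z ω) :
    ∫⁻ ω, X ω ∂P < ⊤
      ∧ ∫⁻ ω, X ω ∂P ≤ (∫⁻ ω, Z ω ∂P) / (1 - ∫⁻ ω, Y ω ∂P) := by
  set a := ∫⁻ ω, Y ω ∂P with ha
  set C := ∫⁻ ω, Z ω ∂P with hC
  have h0 : (1 : ENNReal) - a ≠ 0 := (tsub_pos_of_lt hEY).ne'
  have h1top : (1 : ENNReal) - a ≠ ⊤ := (lt_of_le_of_lt tsub_le_self ENNReal.one_lt_top).ne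
  have hatop : a ≠ ⊤ := (hEY.trans ENNReal.one_lt_top).ne
  -- key per-n estimate
  have key : ∀ n : ℕ, ∫⁻ ω, Set.indicator {ω | X ω ≤ (n : ENNReal)} X ω ∂P
      ≤ C / (1 - a) := by
    intro n
    set N : ENNReal := (n : ENNReal) with hN
    set s := ∫⁻ ω, Set.indicator {ω | X ω ≤ N} X ω ∂P with hs
    set p := P {ω | N < X ω} with hp
    have hNtop : N ≠ ⊤ := ENNReal.natCast_ne_top n
    have hset : MeasurableSet {ω | N < X ω} := measurableSet_lt measurable_const hX
    have hsetle : MeasurableSet {ω | X ω ≤ N} := measurableSet_le hX measurable_const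
    have hχm : Measurable (fun x : ENNReal => (if N < x then (1:ENNReal) else 0)) :=
      Measurable.ite measurableSet_Ioi measurable_const measurable_const
    have hχ : Measurable (fun ω => (if N < X ω then (1:ENNReal) else 0)) := hχm.comp hX
    have hχint : ∫⁻ ω, (if N < X ω then (1:ENNReal) else 0) ∂P = p := by
      rw [hp, ← lintegral_indicator_one hset]
      exact lintegral_congr fun ω => by simp [Set.indicator_apply]
    -- independence consequences
    have hindY : ProbabilityTheory.IndepFun Y ((fun x : ENNReal => x ⊓ N) ∘ X) P :=
      hindep.symm.comp measurable_id (measurable_id.inf measurable_const)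
    have hYXn : ∫⁻ ω, Y ω * (X ω ⊓ N) ∂P = a * ∫⁻ ω, X ω ⊓ N ∂P := by
      exact ProbabilityTheory.lintegral_mul_eq_lintegral_mul_lintegral_of_indepFun''
        hY.aemeasurable ((measurable_id.inf measurable_const).comp hX).aemeasurable hindY
    have hindYχ : ProbabilityTheory.IndepFun Y
        ((fun x : ENNReal => if N < x then (1:ENNReal) else 0) ∘ X) P :=
      hindep.symm.comp measurable_id hχm
    have hYχ : ∫⁻ ω, Y ω * (if N < X ω then (1:ENNReal) else 0) ∂P = a * p := by
      rw [ProbabilityTheory.lintegral_mul_eq_lintegral_mul_lintegral_of_indepFun''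
        hY.aemeasurable (hχ.aemeasurable) hindYχ, hχint]
    -- m = s + N * p
    set m := ∫⁻ ω, X ω ⊓ N ∂P with hm
    have hm_split : m = s + N * p := by
      have hpt : ∀ ω, X ω ⊓ N = Set.indicator {ω | X ω ≤ N} X ω
          + N * (if N < X ω then 1 else 0) := by
        intro ω
        by_cases h : X ω ≤ N
        · simp [Set.indicator, h, not_lt.2 h, inf_eq_left.2 h]
        · simp [Set.indicator, h, not_le.1 h, inf_eq_right.2 (not_le.1 h).le]
      rw [hm, lintegral_congr hpt, lintegral_add_left (hX.indicator hsetle),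
        lintegral_const_mul _ hχ, hχint]
    -- law step: ∫ X ⊓ N = ∫ X' ⊓ N ≤ ∫ (Y X + Z) ⊓ N
    have hlawN : ∫⁻ ω, X' ω ⊓ N ∂P = m := by
      have e1 : ∫⁻ x, x ⊓ N ∂(Measure.map X' P) = ∫⁻ ω, X' ω ⊓ N ∂P :=
        lintegral_map (measurable_id.inf measurable_const) hX'
      have e2 : ∫⁻ x, x ⊓ N ∂(Measure.map X P) = ∫⁻ ω, X ω ⊓ N ∂P :=
        lintegral_map (measurable_id.inf measurable_const) hX
      rw [hm, ← e1, ← e2, hlaw]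
    have hstep1 : m ≤ ∫⁻ ω, (Y ω * X ω + Z ω) ⊓ N ∂P := by
      rw [← hlawN]
      refine lintegral_mono_ae ?_
      filter_upwards [hle] with ω hω
      exact inf_le_inf_right _ hω
    -- integrate the pointwise inequality
    have hint : ∫⁻ ω, (Y ω * X ω + Z ω) ⊓ N ∂P + N * (a * p)
        ≤ a * m + C + N * p := by
      have hL : ∫⁻ ω, ((Y ω * X ω + Z ω) ⊓ N + N * Y ω * (if N < X ω then 1 else 0)) ∂P
          = ∫⁻ ω, (Y ω * X ω + Z ω) ⊓ N ∂P + N * (a * p) := by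
        rw [lintegral_add_left (f := fun ω => (Y ω * X ω + Z ω) ⊓ N) (((hY.mul hX).add hZ).inf measurable_const)]
        congr 1
        have : ∀ ω, N * Y ω * (if N < X ω then (1:ENNReal) else 0)
            = N * (Y ω * (if N < X ω then 1 else 0)) := fun ω => by ring
        rw [lintegral_congr this, lintegral_const_mul (f := fun ω => Y ω * (if N < X ω then (1:ENNReal) else 0)) _ (hY.mul hχ), hYχ]
      have hR : ∫⁻ ω, (Y ω * (X ω ⊓ N) + Z ω + N * (if N < X ω then 1 else 0)) ∂P
          = a * m + C + N * p := by
        rw [lintegral_add_left (f := fun ω => Y ω * (X ω ⊓ N) + Z ω) ((hY.mul (hX.inf measurable_const)).add hZ),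
          lintegral_add_left (f := fun ω => Y ω * (X ω ⊓ N)) (hY.mul (hX.inf measurable_const)),
          lintegral_const_mul _ hχ, hχint, hYXn]
      rw [← hL, ← hR]
      exact lintegral_mono fun ω => stmt14_ptwise (Y ω) (X ω) (Z ω) N
    -- combine
    have hcomb : m + N * (a * p) ≤ a * m + C + N * p :=
      le_trans (add_le_add hstep1 le_rfl) hint
    rw [hm_split] at hcomb
    -- cancel the finite quantity N*p + N*a*p
    have hc_ne : N * p + N * (a * p) ≠ ⊤ := by
      have h1 : N * p ≠ ⊤ := ENNReal.mul_ne_top hNtop (measure_ne_top P _)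
      have h2 : N * (a * p) ≠ ⊤ :=
        ENNReal.mul_ne_top hNtop (ENNReal.mul_ne_top hatop (measure_ne_top P _))
      exact ENNReal.add_ne_top.2 ⟨h1, h2⟩
    have hcomb2 : s + (N * p + N * (a * p)) ≤ (a * s + C) + (N * p + N * (a * p)) := by
      calc s + (N * p + N * (a * p)) = s + N * p + N * (a * p) := by ring
        _ ≤ a * (s + N * p) + C + N * p := hcomb
        _ = (a * s + C) + (N * p + N * (a * p)) := by ring
    have hsC : s ≤ a * s + C := (ENNReal.add_le_add_iff_right hc_ne).1 hcomb2
    -- s is finite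
    have hs_ne : s ≠ ⊤ := by
      have : s ≤ N := by
        rw [hs]
        calc ∫⁻ ω, Set.indicator {ω | X ω ≤ N} X ω ∂P ≤ ∫⁻ _, N ∂P := by
              refine lintegral_mono fun ω => ?_
              by_cases h : X ω ≤ N <;> simp [Set.indicator, h]
          _ = N := by simp
      exact (this.trans_lt hNtop.lt_top).ne
    have has_ne : a * s ≠ ⊤ := ENNReal.mul_ne_top hatop hs_ne
    -- deduce (1-a) * s ≤ C
    have hfin : (1 - a) * s + a * s = s := by
      rw [← add_mul, tsub_add_cancel_of_le hEY.le, one_mul]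
    have h2 : (1 - a) * s + a * s ≤ C + a * s := by
      rw [hfin]; rw [add_comm] at hsC; exact hsC
    have h3 : (1 - a) * s ≤ C := (ENNReal.add_le_add_iff_right has_ne).1 h2
    rw [ENNReal.le_div_iff_mul_le (Or.inl h0) (Or.inl h1top), mul_comm]
    exact h3
  -- monotone convergence
  set f : ℕ → Ω → ENNReal := fun n ω => Set.indicator {ω | X ω ≤ (n : ENNReal)} X ω with hf
  have hfm : ∀ n, Measurable (f n) := fun n =>
    hX.indicator (measurableSet_le hX measurable_const)
  have hfmono : Monotone f := by
    intro i j hij ω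
    simp only [hf, Set.indicator]
    by_cases h : X ω ≤ (i : ENNReal)
    · have : X ω ≤ (j : ENNReal) := h.trans (by exact_mod_cast Nat.cast_le.2 hij)
      simp [h, this]
    · simp [h]
  have hae : (fun ω => ⨆ n, f n ω) =ᵐ[P] X := by
    filter_upwards [hXfin] with ω hω
    apply le_antisymm
    · refine iSup_le fun n => ?_
      simp only [hf, Set.indicator]
      by_cases h : X ω ≤ (n : ENNReal) <;> simp [h]
    · obtain ⟨n, hn⟩ := ENNReal.exists_nat_gt hω.ne
      have : f n ω = X ω := by simp [hf, Set.indicator, hn.le]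
      exact this ▸ le_iSup (fun k => f k ω) n
  have hXint : ∫⁻ ω, X ω ∂P = ⨆ n, ∫⁻ ω, f n ω ∂P := by
    rw [← lintegral_congr_ae hae, lintegral_iSup hfm hfmono]
  have hfinal : ∫⁻ ω, X ω ∂P ≤ C / (1 - a) := by
    rw [hXint]; exact iSup_le key
  refine ⟨hfinal.trans_lt (ENNReal.div_lt_top hZint.ne h0), hfinal⟩
end

section
/- Let 𝐒 be the weighted Horton–Strahler number and define, for a weighted tree with edge lengths 𝐓 with 𝐒(𝐓) ≥ r, the r-Horton-pruned tree 𝐑_r(𝐓). Then the number of children of the root of R_r(𝐓) is never equal to 1, and 𝐒(𝐑_r(𝐓)) = 𝐒(𝐓) - r. -/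
/-- Weighted trees with edge lengths: each node carries the length of the edge to its parent
and a real number (only the numbers at the leaves — the weights — are relevant). -/
inductive WLTree : Type where
  | node : ℝ → ℝ → List WLTree → WLTree

namespace WLTree

/-- Length of the root edge. -/
def len : WLTree → ℝ
  | node l _ _ => l

/-- The list of root subtrees. -/
def kids : WLTree → List WLTree
  | node _ _ ts => ts

/-- The weighted Horton–Strahler number (edge lengths are irrelevant): the weight for a single
node; otherwise `max_{i,j} max (𝐒(𝐭_i), 𝐒(𝐭_j), 1_{i≠j} + min (𝐒(𝐭_i), 𝐒(𝐭_j)))` over the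
root subtrees. -/
def whs : WLTree → ℝ
  | node _ w [] => w
  | node _ _ (t :: ts) => pairCombine ((t :: ts).attach.map (fun s => whs s.1))
decreasing_by simp_wf; have := List.sizeOf_lt_of_mem s.2; simp only [List.cons.sizeOf_spec] at this ⊢; omega

/-- The list of the weights of the leaves. -/
def leafWeights : WLTree → List ℝ
  | node _ w [] => [w]
  | node _ _ (t :: ts) => ((t :: ts).attach.map (fun s => leafWeights s.1)).flatten
decreasing_by simp_wf; have := List.sizeOf_lt_of_mem s.2; simp only [List.cons.sizeOf_spec] at this ⊢; omega

/-- All edge lengths are positive. -/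
def PosLen : WLTree → Prop
  | node l _ ts => 0 < l ∧ ∀ s ∈ ts.attach, PosLen s.1
decreasing_by simp_wf; have := List.sizeOf_lt_of_mem s.2; (try simp only [List.cons.sizeOf_spec] at this ⊢); omega

/-- The `r`-weighted Horton pruning `𝐑_r(𝐓)`: delete all root subtrees whose weighted
Horton–Strahler number is `< r`, contract the chains of vertices with a single remaining
child (adding the edge lengths), give a new leaf the weight "maximal weighted Horton–Strahler
number achieved along the contracted part, minus `r`" (for the subtree stemming from it this
maximum is the weighted Horton–Strahler number of that whole subtree). -/
noncomputable def prune (r : ℝ) : WLTree → WLTree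
  | node l w ts =>
    let goods := ts.attach.filterMap
      (fun s => if r ≤ whs s.1 then some (prune r s.1) else none)
    match goods with
    | [] => node l (whs (node l w ts) - r) []
    | [s'] =>
        if s'.kids.isEmpty then node (l + s'.len) (whs (node l w ts) - r) []
        else node (l + s'.len) 0 s'.kids
    | _ => node l 0 goods
decreasing_by simp_wf; have := List.sizeOf_lt_of_mem s.2; (try simp only [List.cons.sizeOf_spec] at this ⊢); omega

end WLTree

section Auxiliary

open WLTree

lemma foldr_max_nonneg_s18 (L : List ℝ) : 0 ≤ L.foldr max 0 := by
  induction L with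
  | nil => simp
  | cons a L ih => simpa using Or.inr ih

lemma le_foldr_max_s18 {L : List ℝ} {a : ℝ} (h : a ∈ L) : a ≤ L.foldr max 0 := by
  induction L with
  | nil => simp at h
  | cons b L ih =>
    rcases List.mem_cons.1 h with h | h
    · simp [h]
    · simpa using Or.inr (ih h)

lemma foldr_max_le {L : List ℝ} {b : ℝ} (h0 : 0 ≤ b) (h : ∀ a ∈ L, a ≤ b) :
    L.foldr max 0 ≤ b := by
  induction L with
  | nil => simpa
  | cons a L ih =>
    simp only [List.foldr_cons, max_le_iff]
    exact ⟨h a (by simp), ih fun x hx => h x (List.mem_cons_of_mem _ hx)⟩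

lemma pc_nonneg (l : List ℝ) : 0 ≤ pairCombine l := foldr_max_nonneg_s18 _

lemma term_mem (l : List ℝ) {i j : ℕ} (hi : i < l.length) (hj : j < l.length) :
    max (max l[i] l[j]) ((if i ≠ j then (1:ℝ) else 0) + min l[i] l[j])
      ∈ (((l.zipIdx.map Prod.swap).map (fun p => (l.zipIdx.map Prod.swap).map (fun q =>
      max (max p.2 q.2) ((if p.1 ≠ q.1 then (1:ℝ) else 0) + min p.2 q.2)))).flatten) := by
  rw [List.mem_flatten]
  refine ⟨_, List.mem_map.2 ⟨(i, l[i]), ?_, rfl⟩, List.mem_map.2 ⟨(j, l[j]), ?_, rfl⟩⟩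
  · exact List.mem_map.2 ⟨(l[i], i), List.mem_zipIdx_iff_getElem?.2 (by simp [hi]), rfl⟩
  · exact List.mem_map.2 ⟨(l[j], j), List.mem_zipIdx_iff_getElem?.2 (by simp [hj]), rfl⟩

lemma mem_swap_zipIdx {l : List ℝ} {i : ℕ} {x : ℝ} (h : (i, x) ∈ l.zipIdx.map Prod.swap) :
    (x, i) ∈ l.zipIdx := by
  obtain ⟨⟨a, b⟩, hab, he⟩ := List.mem_map.1 h
  simp only [Prod.swap_prod_mk, Prod.mk.injEq] at he
  obtain ⟨rfl, rfl⟩ := he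
  exact hab

lemma pc_ge_mem {l : List ℝ} {x : ℝ} (h : x ∈ l) : x ≤ pairCombine l := by
  obtain ⟨i, hi, rfl⟩ := List.mem_iff_getElem.1 h
  refine le_trans ?_ (le_foldr_max_s18 (term_mem l hi hi))
  simp

lemma pc_ge_pair {l : List ℝ} {x y : ℝ} (h : [x, y].Sublist l) :
    1 + min x y ≤ pairCombine l := by
  obtain ⟨is, his, hpw⟩ := List.sublist_eq_map_getElem h
  match is, his with
  | [i, j], his =>
    simp only [List.map_cons, List.map_nil, List.cons.injEq] at his
    obtain ⟨hx, hy, -⟩ := his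
    have hij : (i:ℕ) ≠ (j:ℕ) := by
      have := List.pairwise_cons.1 hpw
      exact Nat.ne_of_lt (this.1 j (by simp))
    have hterm := term_mem l i.isLt j.isLt
    rw [if_pos hij] at hterm
    refine le_trans ?_ (le_foldr_max_s18 hterm)
    simp [hx, hy, List.get_eq_getElem]

lemma pair_sublist_of_ne {l : List ℝ} {i j : ℕ} (hi : i < l.length) (hj : j < l.length)
    (hij : i ≠ j) : [l[i], l[j]].Sublist l ∨ [l[j], l[i]].Sublist l := by
  rcases lt_or_gt_of_ne hij with h | h
  · left
    have := List.map_getElem_sublist (l := l) (is := [⟨i, hi⟩, ⟨j, hj⟩]) (by simp [h])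
    simpa using this
  · right
    have := List.map_getElem_sublist (l := l) (is := [⟨j, hj⟩, ⟨i, hi⟩]) (by simp [h])
    simpa using this

lemma pc_le {l : List ℝ} {b : ℝ} (h0 : 0 ≤ b) (h1 : ∀ x ∈ l, x ≤ b)
    (h2 : ∀ x y, [x, y].Sublist l → 1 + min x y ≤ b) : pairCombine l ≤ b := by
  refine foldr_max_le h0 ?_
  intro a ha
  rw [List.mem_flatten] at ha
  obtain ⟨inner, hinner, ha⟩ := ha
  obtain ⟨p, hp, rfl⟩ := List.mem_map.1 hinner
  obtain ⟨q, hq, rfl⟩ := List.mem_map.1 ha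
  obtain ⟨i, x⟩ := p
  obtain ⟨j, y⟩ := q
  obtain ⟨hi, hx'⟩ := List.mem_zipIdx' (mem_swap_zipIdx hp)
  obtain ⟨hj, hy'⟩ := List.mem_zipIdx' (mem_swap_zipIdx hq)
  simp only
  have hxm : x ∈ l := hx' ▸ List.getElem_mem hi
  have hym : y ∈ l := hy' ▸ List.getElem_mem hj
  have hx := h1 _ hxm
  have hy := h1 _ hym
  by_cases hij : i = j
  · subst hij
    have hxy : x = y := hx'.trans hy'.symm
    simp only [ne_eq, not_true_eq_false, reduceIte, zero_add, max_le_iff]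
    exact ⟨⟨hx, hy⟩, hxy ▸ (by simpa using hx)⟩
  · rw [if_pos hij]
    have hmin : 1 + min x y ≤ b := by
      rcases pair_sublist_of_ne hi hj hij with h | h
      · rw [← hx', ← hy'] at h
        exact h2 _ _ h
      · rw [← hx', ← hy'] at h
        simpa [min_comm] using h2 _ _ h
    simp only [max_le_iff]
    exact ⟨⟨hx, hy⟩, hmin⟩

lemma whs_leaf (l w : ℝ) : whs (node l w []) = w := by simp [whs]

lemma whs_node {ts : List WLTree} (h : ts ≠ []) (l w : ℝ) :
    whs (node l w ts) = pairCombine (ts.map whs) := by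
  match ts, h with
  | t :: ts, _ => rw [whs]; rw [List.attach_map_val]

lemma whs_ge_of_mem {t : WLTree} {ts : List WLTree} (h : t ∈ ts) (l w : ℝ) :
    whs t ≤ whs (node l w ts) := by
  rw [whs_node (List.ne_nil_of_mem h)]
  exact pc_ge_mem (List.mem_map_of_mem h)

lemma two_le {r : ℝ} {ts : List WLTree} {t₁ t₂ : WLTree} (hs : [t₁, t₂].Sublist ts)
    (h1 : r ≤ whs t₁) (h2 : r ≤ whs t₂) (l w : ℝ) : 1 + r ≤ whs (node l w ts) := by
  have hne : ts ≠ [] := by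
    rintro rfl
    simpa using hs.length_le
  rw [whs_node hne]
  have := pc_ge_pair (l := ts.map whs) (x := whs t₁) (y := whs t₂)
    (by simpa using hs.map whs)
  have : 1 + min (whs t₁) (whs t₂) ≤ pairCombine (ts.map whs) := this
  have hmin : r ≤ min (whs t₁) (whs t₂) := le_min h1 h2
  linarith

lemma goods_eq (r : ℝ) (ts : List WLTree) :
    ts.attach.filterMap (fun s => if r ≤ whs s.1 then some (prune r s.1) else none)
      = (ts.filter (fun t => decide (r ≤ whs t))).map (prune r) := by
  induction ts with
  | nil => simp
  | cons t ts ih =>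
    by_cases h : r ≤ whs t <;>
      simp_all [List.attach_cons, List.filterMap_cons, List.filterMap_map, List.filter_cons, h,
        Function.comp]

lemma prune_nil {r l w : ℝ} {ts : List WLTree}
    (h : (ts.filter (fun t => decide (r ≤ whs t))).map (prune r) = []) :
    prune r (node l w ts) = node l (whs (node l w ts) - r) [] := by
  rw [prune]
  simp only [goods_eq, h]

lemma prune_single_leaf {r l w : ℝ} {ts : List WLTree} {s' : WLTree}
    (h : (ts.filter (fun t => decide (r ≤ whs t))).map (prune r) = [s'])
    (he : s'.kids.isEmpty = true) :
    prune r (node l w ts) = node (l + s'.len) (whs (node l w ts) - r) [] := by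
  rw [prune]
  simp only [goods_eq, h, he]
  simp

lemma prune_single {r l w : ℝ} {ts : List WLTree} {s' : WLTree}
    (h : (ts.filter (fun t => decide (r ≤ whs t))).map (prune r) = [s'])
    (he : s'.kids.isEmpty = false) :
    prune r (node l w ts) = node (l + s'.len) 0 s'.kids := by
  rw [prune]
  simp only [goods_eq, h, he]
  simp

lemma prune_multi {r l w : ℝ} {ts : List WLTree} {a b : WLTree} {rest : List WLTree}
    (h : (ts.filter (fun t => decide (r ≤ whs t))).map (prune r) = a :: b :: rest) :
    prune r (node l w ts) = node l 0 (a :: b :: rest) := by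
  rw [prune]
  simp only [goods_eq, h]

lemma sizeOf_lt_of_mem_tree {t : WLTree} {ts : List WLTree} (h : t ∈ ts) (l w : ℝ) :
    sizeOf t < sizeOf (node l w ts) := by
  have h1 := List.sizeOf_lt_of_mem h
  simp only [WLTree.node.sizeOf_spec]
  omega

lemma aux1 (r : ℝ) : ∀ (n : ℕ) (t : WLTree), sizeOf t ≤ n →
    (prune r t).kids ≠ [] → r + 1 ≤ whs t := by
  intro n
  induction n with
  | zero =>
    intro t ht
    obtain ⟨l, w, ts⟩ := t
    simp only [WLTree.node.sizeOf_spec] at ht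
    omega
  | succ n ih =>
    intro t ht hk
    obtain ⟨l, w, ts⟩ := t
    rcases hg : ts.filter (fun t => decide (r ≤ whs t)) with _ | ⟨t₀, _ | ⟨t₂, rest⟩⟩
    · rw [prune_nil (by rw [hg]; rfl)] at hk
      simp [kids] at hk
    · -- single good child
      have ht₀ : t₀ ∈ ts ∧ r ≤ whs t₀ := by
        have := List.mem_filter.1 (hg ▸ List.mem_singleton_self t₀)
        exact ⟨this.1, of_decide_eq_true this.2⟩
      have hmap : (ts.filter (fun t => decide (r ≤ whs t))).map (prune r) = [prune r t₀] := by
        rw [hg]; rfl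
      by_cases he : (prune r t₀).kids.isEmpty
      · rw [prune_single_leaf hmap he] at hk
        simp [kids] at hk
      · have hne : (prune r t₀).kids ≠ [] := by
          simpa [List.isEmpty_eq_false_iff] using he
        have hsz : sizeOf t₀ ≤ n := by
          have := sizeOf_lt_of_mem_tree ht₀.1 l w
          omega
        have := ih t₀ hsz hne
        exact le_trans this (whs_ge_of_mem ht₀.1 l w)
    · -- at least two good children
      have h₁ : t₀ ∈ ts.filter (fun t => decide (r ≤ whs t)) := by rw [hg]; simp
      have h₂ : t₂ ∈ ts.filter (fun t => decide (r ≤ whs t)) := by rw [hg]; simp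
      have hr₁ : r ≤ whs t₀ := of_decide_eq_true (List.mem_filter.1 h₁).2
      have hr₂ : r ≤ whs t₂ := of_decide_eq_true (List.mem_filter.1 h₂).2
      have hsub : [t₀, t₂].Sublist ts := by
        have : [t₀, t₂].Sublist (t₀ :: t₂ :: rest) :=
          ((List.nil_sublist rest).cons₂ t₂).cons₂ t₀
        exact (hg ▸ this).trans (List.filter_sublist (l := ts))
      have := two_le hsub hr₁ hr₂ l w
      linarith

end Auxiliary
section Main
open WLTree

lemma aux2 (r : ℝ) (hr : 0 ≤ r) : ∀ (n : ℕ) (t : WLTree), sizeOf t ≤ n → r ≤ whs t →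
    (prune r t).kids.length ≠ 1 ∧ (prune r t).whs = whs t - r := by
  intro n
  induction n with
  | zero =>
    intro t ht
    obtain ⟨l, w, ts⟩ := t
    simp only [WLTree.node.sizeOf_spec] at ht
    omega
  | succ n ih =>
    intro t ht hS
    obtain ⟨l, w, ts⟩ := t
    rcases hg : ts.filter (fun t => decide (r ≤ whs t)) with _ | ⟨t₀, _ | ⟨t₂, rest⟩⟩
    · -- no good children: new leaf, weight whs T - r
      rw [prune_nil (by rw [hg]; rfl)]
      exact ⟨by simp [kids], whs_leaf _ _⟩
    · -- exactly one good child t₀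
      have ht₀ : t₀ ∈ ts ∧ r ≤ whs t₀ := by
        have := List.mem_filter.1 (hg ▸ List.mem_singleton_self t₀)
        exact ⟨this.1, of_decide_eq_true this.2⟩
      have hmap : (ts.filter (fun t => decide (r ≤ whs t))).map (prune r) = [prune r t₀] := by
        rw [hg]; rfl
      have hsz : sizeOf t₀ ≤ n := by
        have := sizeOf_lt_of_mem_tree ht₀.1 l w
        omega
      obtain ⟨ihk, ihw⟩ := ih t₀ hsz ht₀.2
      by_cases he : (prune r t₀).kids.isEmpty
      · rw [prune_single_leaf hmap he]
        exact ⟨by simp [kids], whs_leaf _ _⟩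
      · rw [prune_single hmap (by simpa using he)]
        have hne : (prune r t₀).kids ≠ [] := by
          simpa [List.isEmpty_eq_false_iff] using he
        have hbig : r + 1 ≤ whs t₀ := aux1 r n t₀ hsz hne
        -- whs (node l w ts) = whs t₀
        have hSeq : whs (node l w ts) = whs t₀ := by
          refine le_antisymm ?_ (whs_ge_of_mem ht₀.1 l w)
          rw [whs_node (List.ne_nil_of_mem ht₀.1)]
          refine pc_le (le_trans hr ht₀.2) ?_ ?_
          · intro x hx
            obtain ⟨s, hs, rfl⟩ := List.mem_map.1 hx
            by_cases hgood : r ≤ whs s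
            · have : s ∈ ts.filter (fun t => decide (r ≤ whs t)) :=
                List.mem_filter.2 ⟨hs, decide_eq_true hgood⟩
              rw [hg, List.mem_singleton] at this
              rw [this]
            · linarith [le_of_not_ge hgood]
          · intro x y hxy
            obtain ⟨l', hl', hmapeq⟩ := List.sublist_map_iff.1 hxy
            match l', hmapeq with
            | [a, b], hmapeq =>
              simp only [List.map_cons, List.map_nil, List.cons.injEq] at hmapeq
              obtain ⟨rfl, rfl, -⟩ := hmapeq
              have hnot : ¬ (r ≤ whs a ∧ r ≤ whs b) := by
                rintro ⟨ha, hb⟩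
                have hfs : [a, b].Sublist (ts.filter (fun t => decide (r ≤ whs t))) := by
                  have := hl'.filter (fun t => decide (r ≤ whs t))
                  rwa [List.filter_cons, List.filter_cons, if_pos (decide_eq_true ha),
                    if_pos (decide_eq_true hb), List.filter_nil] at this
                rw [hg] at hfs
                have := hfs.length_le
                simp at this
              have hmin : min (whs a) (whs b) < r := by
                rcases not_and_or.1 hnot with h | h
                · exact lt_of_le_of_lt (min_le_left _ _) (lt_of_not_ge h)
                · exact lt_of_le_of_lt (min_le_right _ _) (lt_of_not_ge h)
              linarith
        -- conclude
        rcases hps : prune r t₀ with ⟨l₂, w₂, ks⟩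
        rw [hps] at ihk ihw hne
        simp only [kids] at ihk hne
        constructor
        · simpa [kids] using ihk
        · rw [hSeq, ← ihw]
          simp only [kids]
          rw [whs_node hne, whs_node hne]
    · -- at least two good children
      set gts := ts.filter (fun t => decide (r ≤ whs t)) with hgts
      have hmap : gts.map (prune r)
          = prune r t₀ :: prune r t₂ :: rest.map (prune r) := by rw [hg]; rfl
      rw [prune_multi hmap]
      have hgood : ∀ s ∈ gts, s ∈ ts ∧ r ≤ whs s := fun s hs =>
        ⟨(List.mem_filter.1 hs).1, of_decide_eq_true (List.mem_filter.1 hs).2⟩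
      have hgsub : gts.Sublist ts := List.filter_sublist (l := ts)
      have hIH : ∀ s ∈ gts, whs (prune r s) = whs s - r := by
        intro s hs
        have hsz : sizeOf s ≤ n := by
          have := sizeOf_lt_of_mem_tree (hgood s hs).1 l w
          omega
        exact (ih s hsz (hgood s hs).2).2
      have hts_ne : ts ≠ [] := List.ne_nil_of_mem (hgood t₀ (by rw [hg]; simp)).1
      have hS12 : [t₀, t₂].Sublist gts := by
        rw [hg]
        exact ((List.nil_sublist rest).cons₂ t₂).cons₂ t₀
      have hr₁ : r ≤ whs t₀ := (hgood t₀ (hS12.subset (by simp))).2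
      have hr₂ : r ≤ whs t₂ := (hgood t₂ (hS12.subset (by simp))).2
      have hSbig : 1 + r ≤ whs (node l w ts) := two_le (hS12.trans hgsub) hr₁ hr₂ l w
      have hwhseq : (prune r t₀ :: prune r t₂ :: rest.map (prune r)).map whs
          = gts.map (fun s => whs s - r) := by
        rw [← hmap, List.map_map]
        exact List.map_congr_left fun s hs => hIH s hs
      constructor
      · simp [kids]
      · rw [whs_node (by simp) l 0, hwhseq, whs_node hts_ne]
        set S := pairCombine (ts.map whs) with hSdef
        have hSbig' : 1 + r ≤ S := by
          rw [hSdef, ← whs_node hts_ne l w]; exact hSbig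
        have hus_pair : 1 + min (whs t₀ - r) (whs t₂ - r)
            ≤ pairCombine (gts.map fun s => whs s - r) := by
          refine pc_ge_pair ?_
          simpa using hS12.map (fun s => whs s - r)
        have hus_nonneg : (0:ℝ) ≤ pairCombine (gts.map fun s => whs s - r) := pc_nonneg _
        have hus_ge1 : (1:ℝ) ≤ pairCombine (gts.map fun s => whs s - r) := by
          have : (0:ℝ) ≤ min (whs t₀ - r) (whs t₂ - r) := le_min (by linarith) (by linarith)
          linarith
        refine le_antisymm ?_ ?_
        · -- pc us ≤ S - r
          refine pc_le (by linarith) ?_ ?_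
          · intro x hx
            obtain ⟨s, hs, rfl⟩ := List.mem_map.1 hx
            have : whs s ≤ S := by
              rw [hSdef, ← whs_node hts_ne l w]
              exact whs_ge_of_mem (hgood s hs).1 l w
            linarith
          · intro x y hxy
            obtain ⟨l', hl', hmapeq⟩ := List.sublist_map_iff.1 hxy
            match l', hmapeq with
            | [a, b], hmapeq =>
              simp only [List.map_cons, List.map_nil, List.cons.injEq] at hmapeq
              obtain ⟨rfl, rfl, -⟩ := hmapeq
              have : 1 + min (whs a) (whs b) ≤ S := by
                refine pc_ge_pair ?_
                simpa using ((hl'.trans hgsub).map whs)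
              rw [min_sub_sub_right]
              linarith
        · -- S - r ≤ pc us
          rw [sub_le_iff_le_add, hSdef]
          refine pc_le (by linarith) ?_ ?_
          · intro x hx
            obtain ⟨s, hs, rfl⟩ := List.mem_map.1 hx
            by_cases hgd : r ≤ whs s
            · have hmem : whs s - r ∈ gts.map (fun s => whs s - r) :=
                List.mem_map_of_mem (List.mem_filter.2 ⟨hs, decide_eq_true hgd⟩)
              have := pc_ge_mem hmem
              linarith
            · linarith [le_of_not_ge hgd]
          · intro x y hxy
            obtain ⟨l', hl', hmapeq⟩ := List.sublist_map_iff.1 hxy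
            match l', hmapeq with
            | [a, b], hmapeq =>
              simp only [List.map_cons, List.map_nil, List.cons.injEq] at hmapeq
              obtain ⟨rfl, rfl, -⟩ := hmapeq
              by_cases hab : r ≤ whs a ∧ r ≤ whs b
              · have hfs : [a, b].Sublist gts := by
                  have := hl'.filter (fun t => decide (r ≤ whs t))
                  rwa [List.filter_cons, List.filter_cons, if_pos (decide_eq_true hab.1),
                    if_pos (decide_eq_true hab.2), List.filter_nil] at this
                have : 1 + min (whs a - r) (whs b - r)
                    ≤ pairCombine (gts.map fun s => whs s - r) := by
                  refine pc_ge_pair ?_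
                  simpa using hfs.map (fun s => whs s - r)
                rw [min_sub_sub_right] at this
                linarith
              · have hmin : min (whs a) (whs b) < r := by
                  rcases not_and_or.1 hab with h | h
                  · exact lt_of_le_of_lt (min_le_left _ _) (lt_of_not_ge h)
                  · exact lt_of_le_of_lt (min_le_right _ _) (lt_of_not_ge h)
                linarith

end Main

/-- For a weighted tree with edge lengths `𝐓` (positive edge lengths, leaf
weights in `[0,1)`) with `𝐒(𝐓) ≥ r ≥ 0`, the root of the `r`-Horton-pruned tree `𝐑_r(𝐓)`
never has exactly one child, and `𝐒(𝐑_r(𝐓)) = 𝐒(𝐓) - r`. -/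
theorem stmt_18 (r : ℝ) (hr : 0 ≤ r) (T : WLTree)
    (hlen : T.PosLen) (hw : ∀ w ∈ T.leafWeights, w ∈ Set.Ico (0:ℝ) 1)
    (hS : r ≤ T.whs) :
    (WLTree.prune r T).kids.length ≠ 1
      ∧ (WLTree.prune r T).whs = T.whs - r := by
  exact aux2 r hr (sizeOf T) T le_rfl hS
end
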